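/- The F-theory of the natural numbers (the set of F-sentences in the language of ordered rings true in ℕ) is decidable. -/

import Mathlib

/-- Terms of the language `{+, ·, 0, 1}` with variables indexed by `ℕ`. -/
inductive OTerm : Type
  | var : ℕ → OTerm
  | zero : OTerm
  | one : OTerm
  | add : OTerm → OTerm → OTerm
  | mul : OTerm → OTerm → OTerm
  deriving DecidableEq

/-- Evaluation of a term in any structure for the language `{+, ·, 0, 1}`. -/
def OTerm.eval {α : Type*} [Add α] [Mul α] [Zero α] [One α]
    (v : ℕ → α) : OTerm → α
  | .var i => v i
  | .zero => 0
  | .one => 1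
  | .add t s => t.eval v + s.eval v
  | .mul t s => t.eval v * s.eval v

/-- The class `F` of formulas: quantifier-free formulas of the language
`{+, ·, <, 0, 1}` closed under Boolean connectives and the quantifier `Q`
("for all sufficiently large"), which binds the variable of the given index. -/
inductive FFormula : Type
  | eq : OTerm → OTerm → FFormula
  | lt : OTerm → OTerm → FFormula
  | not : FFormula → FFormula
  | and : FFormula → FFormula → FFormula
  | or : FFormula → FFormula → FFormula
  | Q : ℕ → FFormula → FFormula
  deriving DecidableEq

/-- Satisfaction: `Q i φ` holds iff there is `z` such that `φ` holds whenever
the variable `i` is assigned any value `x > z`. -/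
def FFormula.Sat (α : Type*) [Add α] [Mul α] [Zero α] [One α] [LT α]
    (v : ℕ → α) : FFormula → Prop
  | .eq t s => t.eval v = s.eval v
  | .lt t s => t.eval v < s.eval v
  | .not φ => ¬ φ.Sat α v
  | .and φ ψ => φ.Sat α v ∧ ψ.Sat α v
  | .or φ ψ => φ.Sat α v ∨ ψ.Sat α v
  | .Q i φ => ∃ z : α, ∀ x : α, z < x → φ.Sat α (Function.update v i x)

/-- Free variables of a term. -/
def OTerm.freeVars : OTerm → Finset ℕ
  | .var i => {i}
  | .zero => ∅
  | .one => ∅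
  | .add t s => t.freeVars ∪ s.freeVars
  | .mul t s => t.freeVars ∪ s.freeVars

/-- Free variables of an `F`-formula; `Q i` binds the variable `i`. -/
def FFormula.freeVars : FFormula → Finset ℕ
  | .eq t s => t.freeVars ∪ s.freeVars
  | .lt t s => t.freeVars ∪ s.freeVars
  | .not φ => φ.freeVars
  | .and φ ψ => φ.freeVars ∪ ψ.freeVars
  | .or φ ψ => φ.freeVars ∪ ψ.freeVars
  | .Q i φ => φ.freeVars.erase i

/-- An `F`-sentence is an `F`-formula with no free variables. -/
def FFormula.IsSentence (φ : FFormula) : Prop := φ.freeVars = ∅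

/-- A Gödel numbering of terms. -/
def OTerm.code : OTerm → ℕ
  | .var i => Nat.pair 0 i
  | .zero => Nat.pair 1 0
  | .one => Nat.pair 2 0
  | .add t s => Nat.pair 3 (Nat.pair t.code s.code)
  | .mul t s => Nat.pair 4 (Nat.pair t.code s.code)

/-- A Gödel numbering of `F`-formulas. -/
def FFormula.code : FFormula → ℕ
  | .eq t s => Nat.pair 0 (Nat.pair t.code s.code)
  | .lt t s => Nat.pair 1 (Nat.pair t.code s.code)
  | .not φ => Nat.pair 2 φ.code
  | .and φ ψ => Nat.pair 3 (Nat.pair φ.code ψ.code)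
  | .or φ ψ => Nat.pair 4 (Nat.pair φ.code ψ.code)
  | .Q i φ => Nat.pair 5 (Nat.pair i φ.code)

/-! ### Auxiliary syntactic operations -/

/-- Substitute term `b` for variable `i`. -/
def OTerm.subst (i : ℕ) (b : OTerm) : OTerm → OTerm
  | .var j => if j = i then b else .var j
  | .zero => .zero
  | .one => .one
  | .add t s => .add (OTerm.subst i b t) (OTerm.subst i b s)
  | .mul t s => .mul (OTerm.subst i b t) (OTerm.subst i b s)

/-- Substitute term `b` for variable `i` in a quantifier-free formula. -/
def FFormula.subst (i : ℕ) (b : OTerm) : FFormula → FFormula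
  | .eq t s => .eq (OTerm.subst i b t) (OTerm.subst i b s)
  | .lt t s => .lt (OTerm.subst i b t) (OTerm.subst i b s)
  | .not φ => .not (FFormula.subst i b φ)
  | .and φ ψ => .and (FFormula.subst i b φ) (FFormula.subst i b ψ)
  | .or φ ψ => .or (FFormula.subst i b φ) (FFormula.subst i b ψ)
  | .Q j φ => .Q j φ

/-- A term bounding (the sum of) all atoms of a quantifier-free formula. -/
def FFormula.thresh : FFormula → OTerm
  | .eq t s => .add t s
  | .lt t s => .add t s
  | .not φ => φ.thresh
  | .and φ ψ => .add φ.thresh ψ.thresh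
  | .or φ ψ => .add φ.thresh ψ.thresh
  | .Q _ _ => .zero

/-- Quantifier-freeness. -/
def FFormula.QFree : FFormula → Prop
  | .eq _ _ => True
  | .lt _ _ => True
  | .not φ => φ.QFree
  | .and φ ψ => φ.QFree ∧ ψ.QFree
  | .or φ ψ => φ.QFree ∧ ψ.QFree
  | .Q _ _ => False

/-- The witnessing "sufficiently large" term for eliminating `Q i φ`. -/
def FFormula.Bterm (i : ℕ) (φ : FFormula) : OTerm :=
  .add (OTerm.subst i .one φ.thresh) .one

/-- Quantifier elimination. -/
def FFormula.elim : FFormula → FFormula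
  | .eq t s => .eq t s
  | .lt t s => .lt t s
  | .not φ => .not φ.elim
  | .and φ ψ => .and φ.elim ψ.elim
  | .or φ ψ => .or φ.elim ψ.elim
  | .Q i φ => FFormula.subst i (FFormula.Bterm i φ.elim) φ.elim

/-- Evaluation of a term at the all-zeroes valuation. -/
def OTerm.eval0 : OTerm → ℕ
  | .var _ => 0
  | .zero => 0
  | .one => 1
  | .add t s => t.eval0 + s.eval0
  | .mul t s => t.eval0 * s.eval0

/-- Boolean evaluation of a quantifier-free sentence. -/
def FFormula.beval : FFormula → Bool
  | .eq t s => t.eval0 == s.eval0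
  | .lt t s => decide (t.eval0 < s.eval0)
  | .not φ => !φ.beval
  | .and φ ψ => φ.beval && ψ.beval
  | .or φ ψ => φ.beval || ψ.beval
  | .Q _ _ => false

/-! ### Semantics of substitution -/

lemma OTerm.eval_subst (i : ℕ) (b : OTerm) (t : OTerm) (v : ℕ → ℕ) :
    (OTerm.subst i b t).eval v = t.eval (Function.update v i (b.eval v)) := by
  induction t with
  | var j =>
      by_cases h : j = i <;> simp [OTerm.subst, OTerm.eval, h, Function.update]
  | zero => rfl
  | one => rfl
  | add t s iht ihs => simp [OTerm.subst, OTerm.eval, iht, ihs]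
  | mul t s iht ihs => simp [OTerm.subst, OTerm.eval, iht, ihs]

lemma FFormula.Sat_subst (i : ℕ) (b : OTerm) (φ : FFormula) (hq : φ.QFree) (v : ℕ → ℕ) :
    (FFormula.subst i b φ).Sat ℕ v ↔ φ.Sat ℕ (Function.update v i (b.eval v)) := by
  induction φ with
  | eq t s => simp [FFormula.subst, FFormula.Sat, OTerm.eval_subst]
  | lt t s => simp [FFormula.subst, FFormula.Sat, OTerm.eval_subst]
  | not φ ih => simp [FFormula.subst, FFormula.Sat, ih hq]
  | and φ ψ ihφ ihψ => simp [FFormula.subst, FFormula.Sat, ihφ hq.1, ihψ hq.2]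
  | or φ ψ ihφ ihψ => simp [FFormula.subst, FFormula.Sat, ihφ hq.1, ihψ hq.2]
  | Q j φ ih => exact absurd hq id

lemma FFormula.QFree_subst (i : ℕ) (b : OTerm) (φ : FFormula) (hq : φ.QFree) :
    (FFormula.subst i b φ).QFree := by
  induction φ with
  | eq t s => trivial
  | lt t s => trivial
  | not φ ih => exact ih hq
  | and φ ψ ihφ ihψ => exact ⟨ihφ hq.1, ihψ hq.2⟩
  | or φ ψ ihφ ihψ => exact ⟨ihφ hq.1, ihψ hq.2⟩
  | Q j φ ih => exact absurd hq id

/-! ### Polynomial bridge -/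

open Polynomial in
/-- View a term as a polynomial over `ℤ` in the variable `i`, with the other
variables evaluated according to `v`. -/
noncomputable def OTerm.toPolyZ (i : ℕ) (v : ℕ → ℕ) : OTerm → Polynomial ℤ
  | .var j => if j = i then Polynomial.X else Polynomial.C (v j : ℤ)
  | .zero => 0
  | .one => 1
  | .add t s => OTerm.toPolyZ i v t + OTerm.toPolyZ i v s
  | .mul t s => OTerm.toPolyZ i v t * OTerm.toPolyZ i v s

lemma OTerm.toPolyZ_eval (i : ℕ) (v : ℕ → ℕ) (t : OTerm) (x : ℕ) :
    (OTerm.toPolyZ i v t).eval (x : ℤ) = ((t.eval (Function.update v i x) : ℕ) : ℤ) := by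
  induction t with
  | var j =>
      rcases eq_or_ne j i with h | h
      · subst h; simp [OTerm.toPolyZ, OTerm.eval]
      · simp [OTerm.toPolyZ, OTerm.eval, h, Function.update_of_ne h]
  | zero => simp [OTerm.toPolyZ, OTerm.eval]
  | one => simp [OTerm.toPolyZ, OTerm.eval]
  | add t s iht ihs => simp [OTerm.toPolyZ, OTerm.eval, iht, ihs]
  | mul t s iht ihs => simp [OTerm.toPolyZ, OTerm.eval, iht, ihs]

lemma OTerm.toPolyZ_coeff_nonneg (i : ℕ) (v : ℕ → ℕ) (t : OTerm) (k : ℕ) :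
    0 ≤ (OTerm.toPolyZ i v t).coeff k := by
  induction t generalizing k with
  | var j =>
      by_cases h : j = i <;>
        simp [OTerm.toPolyZ, h, Polynomial.coeff_X, Polynomial.coeff_C] <;>
        split <;> simp
  | zero => simp [OTerm.toPolyZ]
  | one => simp [OTerm.toPolyZ, Polynomial.coeff_one]; split <;> simp
  | add t s iht ihs =>
      simp only [OTerm.toPolyZ, Polynomial.coeff_add]
      exact add_nonneg (iht k) (ihs k)
  | mul t s iht ihs =>
      simp only [OTerm.toPolyZ, Polynomial.coeff_mul]
      exact Finset.sum_nonneg fun p _ => mul_nonneg (iht p.1) (ihs p.2)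

/-- For a polynomial with nonnegative coefficients, partial coefficient sums are
bounded by the value at `1`. -/
lemma sum_coeff_le_eval_one (P : Polynomial ℤ) (h : ∀ k, 0 ≤ P.coeff k) (m : ℕ) :
    (∑ k ∈ Finset.range m, P.coeff k) ≤ P.eval 1 := by
  have hlt : P.natDegree < max m (P.natDegree + 1) :=
    lt_of_lt_of_le (Nat.lt_succ_self _) (le_max_right m _)
  have hM : P.eval 1 = ∑ k ∈ Finset.range (max m (P.natDegree + 1)), P.coeff k := by
    rw [Polynomial.eval_eq_sum_range' hlt]
    simp
  rw [hM]
  exact Finset.sum_le_sum_of_subset_of_nonneg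
    (Finset.range_subset_range.2 (le_max_left _ _)) (fun k _ _ => h k)

/-- Sign stability: beyond the sum of absolute values of the coefficients, the
sign of an integer polynomial is constant. -/
lemma eval_pos_of_leadingCoeff_pos {D : Polynomial ℤ} {C x : ℤ}
    (hD : D ≠ 0) (hlc : 0 < D.leadingCoeff)
    (hC : ∑ k ∈ Finset.range (D.natDegree + 1), |D.coeff k| ≤ C) (hx : C < x) :
    0 < D.eval x := by
  set d := D.natDegree with hd
  have hx1 : (1 : ℤ) ≤ x := by
    have h0 : (0:ℤ) ≤ ∑ k ∈ Finset.range (d + 1), |D.coeff k| :=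
      Finset.sum_nonneg fun k _ => abs_nonneg _
    omega
  have heval : D.eval x = D.coeff d * x ^ d + ∑ k ∈ Finset.range d, D.coeff k * x ^ k := by
    rw [Polynomial.eval_eq_sum_range, Finset.sum_range_succ]; ring
  have hlc' : (1:ℤ) ≤ D.coeff d := by
    have : D.coeff d = D.leadingCoeff := rfl
    omega
  rcases Nat.eq_zero_or_pos d with hd0 | hd0
  · rw [heval, hd0]
    rw [hd0] at hlc'
    have : (0:ℤ) < D.coeff 0 := by omega
    simpa using this
  have hlow : |∑ k ∈ Finset.range d, D.coeff k * x ^ k| < x ^ d := by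
    calc |∑ k ∈ Finset.range d, D.coeff k * x ^ k|
        ≤ ∑ k ∈ Finset.range d, |D.coeff k * x ^ k| := Finset.abs_sum_le_sum_abs _ _
      _ ≤ ∑ k ∈ Finset.range d, |D.coeff k| * x ^ (d - 1) := by
          refine Finset.sum_le_sum fun k hk => ?_
          rw [abs_mul, abs_pow, abs_of_nonneg (by omega : (0:ℤ) ≤ x)]
          refine mul_le_mul_of_nonneg_left ?_ (abs_nonneg _)
          exact pow_le_pow_right₀ hx1 (by have := Finset.mem_range.1 hk; omega)
      _ = (∑ k ∈ Finset.range d, |D.coeff k|) * x ^ (d - 1) := by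
          rw [Finset.sum_mul]
      _ < x * x ^ (d - 1) := by
          have hsum : (∑ k ∈ Finset.range d, |D.coeff k|) < x := by
            have h1 : (∑ k ∈ Finset.range d, |D.coeff k|) + |D.coeff d| ≤ C := by
              rw [← Finset.sum_range_succ]; exact hC
            have h2 : 0 < |D.coeff d| := by rw [abs_pos]; omega
            omega
          exact mul_lt_mul_of_pos_right hsum (pow_pos (by omega) _)
      _ = x ^ d := by
          rw [← pow_succ']
          congr 1
          omega
  have hlead : x ^ d ≤ D.coeff d * x ^ d := by
    nlinarith [pow_pos (show (0:ℤ) < x by omega) d]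
  have := abs_lt.1 hlow
  omega

lemma sign_stable {D : Polynomial ℤ} {C x y : ℤ}
    (hC : ∑ k ∈ Finset.range (D.natDegree + 1), |D.coeff k| ≤ C)
    (hx : C < x) (hy : C < y) :
    (0 < D.eval x ↔ 0 < D.eval y) ∧ (D.eval x = 0 ↔ D.eval y = 0) := by
  rcases eq_or_ne D 0 with rfl | hD
  · simp
  have hCneg : ∑ k ∈ Finset.range ((-D).natDegree + 1), |(-D).coeff k| ≤ C := by
    simpa using hC
  have hlc : D.leadingCoeff ≠ 0 := Polynomial.leadingCoeff_ne_zero.2 hD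
  rcases lt_trichotomy 0 D.leadingCoeff with h | h | h
  · have h1 := eval_pos_of_leadingCoeff_pos hD h hC hx
    have h2 := eval_pos_of_leadingCoeff_pos hD h hC hy
    constructor <;> constructor <;> intro <;> omega
  · exact absurd h.symm hlc
  · have hD' : -D ≠ 0 := neg_ne_zero.2 hD
    have hlc' : 0 < (-D).leadingCoeff := by
      rw [Polynomial.leadingCoeff_neg]; omega
    have h1 := eval_pos_of_leadingCoeff_pos hD' hlc' hCneg hx
    have h2 := eval_pos_of_leadingCoeff_pos hD' hlc' hCneg hy
    simp only [Polynomial.eval_neg] at h1 h2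
    constructor <;> constructor <;> intro <;> omega

/-! ### Stabilization of atoms and quantifier-free formulas -/

lemma atom_stable (p q : OTerm) (i : ℕ) (v : ℕ → ℕ) {x y : ℕ}
    (hx : p.eval (Function.update v i 1) + q.eval (Function.update v i 1) < x)
    (hy : p.eval (Function.update v i 1) + q.eval (Function.update v i 1) < y) :
    ((p.eval (Function.update v i x) = q.eval (Function.update v i x)) ↔
      (p.eval (Function.update v i y) = q.eval (Function.update v i y))) ∧
    ((p.eval (Function.update v i x) < q.eval (Function.update v i x)) ↔
      (p.eval (Function.update v i y) < q.eval (Function.update v i y))) := by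
  have hP1 : (OTerm.toPolyZ i v p).eval 1 = ((p.eval (Function.update v i 1) : ℕ) : ℤ) := by
    have := OTerm.toPolyZ_eval i v p 1
    simpa using this
  have hQ1 : (OTerm.toPolyZ i v q).eval 1 = ((q.eval (Function.update v i 1) : ℕ) : ℤ) := by
    have := OTerm.toPolyZ_eval i v q 1
    simpa using this
  set C : ℤ := ((p.eval (Function.update v i 1) : ℕ) : ℤ) +
    ((q.eval (Function.update v i 1) : ℕ) : ℤ) with hCdef
  have key : ∀ D : Polynomial ℤ,
      (∀ k, |D.coeff k| ≤ (OTerm.toPolyZ i v p).coeff k + (OTerm.toPolyZ i v q).coeff k) →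
      ∑ k ∈ Finset.range (D.natDegree + 1), |D.coeff k| ≤ C := by
    intro D hD
    calc ∑ k ∈ Finset.range (D.natDegree + 1), |D.coeff k|
        ≤ ∑ k ∈ Finset.range (D.natDegree + 1),
            ((OTerm.toPolyZ i v p).coeff k + (OTerm.toPolyZ i v q).coeff k) :=
          Finset.sum_le_sum fun k _ => hD k
      _ = (∑ k ∈ Finset.range (D.natDegree + 1), (OTerm.toPolyZ i v p).coeff k) +
          (∑ k ∈ Finset.range (D.natDegree + 1), (OTerm.toPolyZ i v q).coeff k) :=
          Finset.sum_add_distrib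
      _ ≤ (OTerm.toPolyZ i v p).eval 1 + (OTerm.toPolyZ i v q).eval 1 := by
          gcongr
          · exact sum_coeff_le_eval_one _ (OTerm.toPolyZ_coeff_nonneg i v p) _
          · exact sum_coeff_le_eval_one _ (OTerm.toPolyZ_coeff_nonneg i v q) _
      _ = C := by rw [hP1, hQ1]
  have hCx : C < (x : ℤ) := by
    rw [hCdef]
    exact_mod_cast hx
  have hCy : C < (y : ℤ) := by
    rw [hCdef]
    exact_mod_cast hy
  have hcoeff : ∀ k, |(OTerm.toPolyZ i v p - OTerm.toPolyZ i v q).coeff k| ≤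
      (OTerm.toPolyZ i v p).coeff k + (OTerm.toPolyZ i v q).coeff k := by
    intro k
    rw [Polynomial.coeff_sub]
    have h1 := OTerm.toPolyZ_coeff_nonneg i v p k
    have h2 := OTerm.toPolyZ_coeff_nonneg i v q k
    rw [abs_sub_le_iff]
    omega
  have hcoeff' : ∀ k, |(OTerm.toPolyZ i v q - OTerm.toPolyZ i v p).coeff k| ≤
      (OTerm.toPolyZ i v p).coeff k + (OTerm.toPolyZ i v q).coeff k := by
    intro k
    have heq : OTerm.toPolyZ i v q - OTerm.toPolyZ i v p
        = -(OTerm.toPolyZ i v p - OTerm.toPolyZ i v q) := by ring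
    rw [heq, Polynomial.coeff_neg, abs_neg]
    exact hcoeff k
  have hs1 := sign_stable (key _ hcoeff) hCx hCy
  have hs2 := sign_stable (key _ hcoeff') hCx hCy
  have evx : ∀ t : OTerm, (OTerm.toPolyZ i v t).eval (x : ℤ) =
      ((t.eval (Function.update v i x) : ℕ) : ℤ) := fun t => OTerm.toPolyZ_eval i v t x
  have evy : ∀ t : OTerm, (OTerm.toPolyZ i v t).eval (y : ℤ) =
      ((t.eval (Function.update v i y) : ℕ) : ℤ) := fun t => OTerm.toPolyZ_eval i v t y
  simp only [Polynomial.eval_sub, evx, evy] at hs1 hs2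
  constructor
  · have h := hs1.2
    constructor <;> intro hh <;> omega
  · have h := hs2.1
    constructor <;> intro hh <;> omega

lemma FFormula.thresh_stable (φ : FFormula) (hq : φ.QFree) (i : ℕ) (v : ℕ → ℕ) {x y : ℕ}
    (hx : φ.thresh.eval (Function.update v i 1) < x)
    (hy : φ.thresh.eval (Function.update v i 1) < y) :
    (φ.Sat ℕ (Function.update v i x) ↔ φ.Sat ℕ (Function.update v i y)) := by
  induction φ with
  | eq p q =>
      simp only [FFormula.thresh, OTerm.eval] at hx hy
      exact (atom_stable p q i v hx hy).1
  | lt p q =>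
      simp only [FFormula.thresh, OTerm.eval] at hx hy
      exact (atom_stable p q i v hx hy).2
  | not φ ih => simp only [FFormula.Sat]; rw [ih hq hx hy]
  | and φ ψ ihφ ihψ =>
      simp only [FFormula.thresh, OTerm.eval] at hx hy
      simp only [FFormula.Sat]
      rw [ihφ hq.1 (by omega) (by omega), ihψ hq.2 (by omega) (by omega)]
  | or φ ψ ihφ ihψ =>
      simp only [FFormula.thresh, OTerm.eval] at hx hy
      simp only [FFormula.Sat]
      rw [ihφ hq.1 (by omega) (by omega), ihψ hq.2 (by omega) (by omega)]
  | Q j φ ih => exact absurd hq id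

lemma FFormula.elimQ_correct (φ : FFormula) (hq : φ.QFree) (i : ℕ) (v : ℕ → ℕ) :
    (FFormula.Q i φ).Sat ℕ v ↔ (FFormula.subst i (FFormula.Bterm i φ) φ).Sat ℕ v := by
  rw [FFormula.Sat_subst _ _ _ hq]
  have hsub : (FFormula.Bterm i φ).eval v = φ.thresh.eval (Function.update v i 1) + 1 := by
    show (OTerm.subst i .one φ.thresh).eval v + OTerm.eval v .one = _
    rw [OTerm.eval_subst]
    rfl
  set T := φ.thresh.eval (Function.update v i 1) with hT
  rw [hsub]
  show (∃ z : ℕ, ∀ x : ℕ, z < x → φ.Sat ℕ (Function.update v i x)) ↔ _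
  constructor
  · rintro ⟨z, hz⟩
    have hx : φ.Sat ℕ (Function.update v i (max (z + 1) (T + 1))) :=
      hz _ (lt_of_lt_of_le (Nat.lt_succ_self z) (le_max_left _ _))
    exact (FFormula.thresh_stable φ hq i v
      (lt_of_lt_of_le (Nat.lt_succ_self T) (le_max_right _ _)) (Nat.lt_succ_self T)).1 hx
  · intro h
    refine ⟨T, fun x hx => ?_⟩
    exact (FFormula.thresh_stable φ hq i v (Nat.lt_succ_self T) hx).1 h

/-! ### Correctness of elimination -/

lemma FFormula.elim_qfree (φ : FFormula) : φ.elim.QFree := by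
  induction φ with
  | eq t s => trivial
  | lt t s => trivial
  | not φ ih => exact ih
  | and φ ψ ihφ ihψ => exact ⟨ihφ, ihψ⟩
  | or φ ψ ihφ ihψ => exact ⟨ihφ, ihψ⟩
  | Q i φ ih => exact FFormula.QFree_subst _ _ _ ih

lemma FFormula.elim_correct (φ : FFormula) : ∀ v : ℕ → ℕ, φ.elim.Sat ℕ v ↔ φ.Sat ℕ v := by
  induction φ with
  | eq t s => intro v; exact Iff.rfl
  | lt t s => intro v; exact Iff.rfl
  | not φ ih => intro v; simp only [FFormula.elim, FFormula.Sat]; rw [ih v]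
  | and φ ψ ihφ ihψ => intro v; simp only [FFormula.elim, FFormula.Sat]; rw [ihφ v, ihψ v]
  | or φ ψ ihφ ihψ => intro v; simp only [FFormula.elim, FFormula.Sat]; rw [ihφ v, ihψ v]
  | Q i φ ih =>
      intro v
      have h1 : (FFormula.Q i φ.elim).Sat ℕ v ↔ (FFormula.Q i φ).Sat ℕ v := by
        simp only [FFormula.Sat]
        exact exists_congr fun z => forall_congr' fun x => imp_congr_right fun _ => ih _
      exact ((FFormula.elimQ_correct φ.elim (FFormula.elim_qfree φ) i v).symm.trans h1)

/-! ### Boolean evaluation -/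

lemma OTerm.eval0_eq (t : OTerm) : t.eval0 = t.eval (fun _ => (0 : ℕ)) := by
  induction t with
  | var j => rfl
  | zero => rfl
  | one => rfl
  | add t s iht ihs => simp [OTerm.eval0, OTerm.eval, iht, ihs]
  | mul t s iht ihs => simp [OTerm.eval0, OTerm.eval, iht, ihs]

lemma FFormula.beval_correct (φ : FFormula) (hq : φ.QFree) :
    φ.beval = true ↔ φ.Sat ℕ (fun _ => 0) := by
  induction φ with
  | eq t s => simp [FFormula.beval, FFormula.Sat, OTerm.eval0_eq]
  | lt t s => simp [FFormula.beval, FFormula.Sat, OTerm.eval0_eq]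
  | not φ ih => simp [FFormula.beval, FFormula.Sat, ← ih hq]
  | and φ ψ ihφ ihψ => simp [FFormula.beval, FFormula.Sat, ← ihφ hq.1, ← ihψ hq.2]
  | or φ ψ ihφ ihψ => simp [FFormula.beval, FFormula.Sat, ← ihφ hq.1, ← ihψ hq.2]
  | Q j φ ih => exact absurd hq id

theorem FFormula.main_sem (φ : FFormula) :
    φ.elim.beval = true ↔ φ.Sat ℕ (fun _ => 0) :=
  (FFormula.beval_correct _ (FFormula.elim_qfree φ)).trans (FFormula.elim_correct φ _)

/-! ### Code arithmetic -/

lemma lt_pair_of_pos {a : ℕ} (b : ℕ) (h : 0 < a) : b < Nat.pair a b := by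
  have h1 : b ≤ Nat.pair 0 b := by
    unfold Nat.pair
    split
    · nlinarith
    · omega
  have h2 : Nat.pair 0 b < Nat.pair a b := Nat.pair_lt_pair_left b h
  omega

lemma unpair2_lt {n : ℕ} (h : 0 < n.unpair.1) : n.unpair.2 < n := by
  conv_rhs => rw [← Nat.pair_unpair n]
  exact lt_pair_of_pos _ h

lemma unpair21_lt {n : ℕ} (h : 0 < n.unpair.1) : n.unpair.2.unpair.1 < n :=
  lt_of_le_of_lt (Nat.unpair_left_le _) (unpair2_lt h)

lemma unpair22_lt {n : ℕ} (h : 0 < n.unpair.1) : n.unpair.2.unpair.2 < n :=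
  lt_of_le_of_lt (Nat.unpair_right_le _) (unpair2_lt h)

lemma cov_get (f : ℕ → ℕ) {m n : ℕ} (h : m < n) :
    (((List.range n).map f)[m]?).getD 0 = f m := by
  rw [List.getElem?_map, List.getElem?_range h]
  rfl

/-! ### Numeric versions of the syntactic operations -/

/-- Numeric version of `OTerm.eval0`. -/
def evalZeroN (n : ℕ) : ℕ :=
  if h3 : n.unpair.1 = 3 then evalZeroN n.unpair.2.unpair.1 + evalZeroN n.unpair.2.unpair.2
  else if h4 : n.unpair.1 = 4 then evalZeroN n.unpair.2.unpair.1 * evalZeroN n.unpair.2.unpair.2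
  else if n.unpair.1 = 2 then 1
  else 0
termination_by n
decreasing_by
  all_goals first
    | exact unpair21_lt (by omega)
    | exact unpair22_lt (by omega)

/-- Numeric version of `OTerm.subst`. -/
def substN (i b : ℕ) (n : ℕ) : ℕ :=
  if h34 : n.unpair.1 = 3 ∨ n.unpair.1 = 4 then
    Nat.pair n.unpair.1
      (Nat.pair (substN i b n.unpair.2.unpair.1) (substN i b n.unpair.2.unpair.2))
  else if n.unpair.1 = 0 then (if n.unpair.2 = i then b else n)
  else n
termination_by n
decreasing_by
  all_goals first
    | exact unpair21_lt (by omega)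
    | exact unpair22_lt (by omega)

/-- Numeric version of `FFormula.thresh`. -/
def threshN (n : ℕ) : ℕ :=
  if h01 : n.unpair.1 = 0 ∨ n.unpair.1 = 1 then Nat.pair 3 n.unpair.2
  else if h2 : n.unpair.1 = 2 then threshN n.unpair.2
  else if h34 : n.unpair.1 = 3 ∨ n.unpair.1 = 4 then
    Nat.pair 3 (Nat.pair (threshN n.unpair.2.unpair.1) (threshN n.unpair.2.unpair.2))
  else Nat.pair 1 0
termination_by n
decreasing_by
  all_goals first
    | exact unpair2_lt (by omega)
    | exact unpair21_lt (by omega)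
    | exact unpair22_lt (by omega)

/-- Numeric version of `FFormula.subst`. -/
def fsubstN (i b : ℕ) (n : ℕ) : ℕ :=
  if h01 : n.unpair.1 = 0 ∨ n.unpair.1 = 1 then
    Nat.pair n.unpair.1
      (Nat.pair (substN i b n.unpair.2.unpair.1) (substN i b n.unpair.2.unpair.2))
  else if h2 : n.unpair.1 = 2 then Nat.pair 2 (fsubstN i b n.unpair.2)
  else if h34 : n.unpair.1 = 3 ∨ n.unpair.1 = 4 then
    Nat.pair n.unpair.1
      (Nat.pair (fsubstN i b n.unpair.2.unpair.1) (fsubstN i b n.unpair.2.unpair.2))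
  else n
termination_by n
decreasing_by
  all_goals first
    | exact unpair2_lt (by omega)
    | exact unpair21_lt (by omega)
    | exact unpair22_lt (by omega)

/-- Numeric version of `FFormula.Bterm`. -/
def btermN (i m : ℕ) : ℕ :=
  Nat.pair 3 (Nat.pair (substN i (Nat.pair 2 0) (threshN m)) (Nat.pair 2 0))

/-- Numeric version of `FFormula.elim`. -/
def elimN (n : ℕ) : ℕ :=
  if h01 : n.unpair.1 = 0 ∨ n.unpair.1 = 1 then n
  else if h2 : n.unpair.1 = 2 then Nat.pair 2 (elimN n.unpair.2)
  else if h34 : n.unpair.1 = 3 ∨ n.unpair.1 = 4 then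
    Nat.pair n.unpair.1
      (Nat.pair (elimN n.unpair.2.unpair.1) (elimN n.unpair.2.unpair.2))
  else if h5 : n.unpair.1 = 5 then
    let e := elimN n.unpair.2.unpair.2
    fsubstN n.unpair.2.unpair.1 (btermN n.unpair.2.unpair.1 e) e
  else n
termination_by n
decreasing_by
  all_goals first
    | exact unpair2_lt (by omega)
    | exact unpair21_lt (by omega)
    | exact unpair22_lt (by omega)

/-- Numeric version of `FFormula.beval`. -/
def bevalN (n : ℕ) : ℕ :=
  if h0 : n.unpair.1 = 0 then
    (if evalZeroN n.unpair.2.unpair.1 = evalZeroN n.unpair.2.unpair.2 then 1 else 0)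
  else if h1 : n.unpair.1 = 1 then
    (if evalZeroN n.unpair.2.unpair.1 < evalZeroN n.unpair.2.unpair.2 then 1 else 0)
  else if h2 : n.unpair.1 = 2 then 1 - bevalN n.unpair.2
  else if h3 : n.unpair.1 = 3 then min (bevalN n.unpair.2.unpair.1) (bevalN n.unpair.2.unpair.2)
  else if h4 : n.unpair.1 = 4 then max (bevalN n.unpair.2.unpair.1) (bevalN n.unpair.2.unpair.2)
  else 0
termination_by n
decreasing_by
  all_goals first
    | exact unpair2_lt (by omega)
    | exact unpair21_lt (by omega)
    | exact unpair22_lt (by omega)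

/-! ### Commutation with codes -/

lemma evalZeroN_code (t : OTerm) : evalZeroN t.code = t.eval0 := by
  induction t with
  | var j => rw [evalZeroN]; simp [OTerm.code, Nat.unpair_pair, OTerm.eval0]
  | zero => rw [evalZeroN]; simp [OTerm.code, Nat.unpair_pair, OTerm.eval0]
  | one => rw [evalZeroN]; simp [OTerm.code, Nat.unpair_pair, OTerm.eval0]
  | add t s iht ihs =>
      rw [evalZeroN]; simp [OTerm.code, Nat.unpair_pair, OTerm.eval0, iht, ihs]
  | mul t s iht ihs =>
      rw [evalZeroN]; simp [OTerm.code, Nat.unpair_pair, OTerm.eval0, iht, ihs]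

lemma substN_code (i : ℕ) (b : OTerm) (t : OTerm) :
    substN i b.code t.code = (OTerm.subst i b t).code := by
  induction t with
  | var j =>
      rw [substN]
      simp only [OTerm.code, Nat.unpair_pair, OTerm.subst]
      norm_num
      split <;> simp [OTerm.code]
  | zero => rw [substN]; simp [OTerm.code, Nat.unpair_pair, OTerm.subst]
  | one => rw [substN]; simp [OTerm.code, Nat.unpair_pair, OTerm.subst]
  | add t s iht ihs =>
      rw [substN]; simp [OTerm.code, Nat.unpair_pair, OTerm.subst, iht, ihs]
  | mul t s iht ihs =>
      rw [substN]; simp [OTerm.code, Nat.unpair_pair, OTerm.subst, iht, ihs]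

lemma threshN_code (φ : FFormula) : threshN φ.code = φ.thresh.code := by
  induction φ with
  | eq t s => rw [threshN]; simp [FFormula.code, Nat.unpair_pair, FFormula.thresh, OTerm.code]
  | lt t s => rw [threshN]; simp [FFormula.code, Nat.unpair_pair, FFormula.thresh, OTerm.code]
  | not φ ih => rw [threshN]; simp [FFormula.code, Nat.unpair_pair, FFormula.thresh, ih]
  | and φ ψ ihφ ihψ =>
      rw [threshN]
      simp [FFormula.code, Nat.unpair_pair, FFormula.thresh, OTerm.code, ihφ, ihψ]
  | or φ ψ ihφ ihψ =>
      rw [threshN]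
      simp [FFormula.code, Nat.unpair_pair, FFormula.thresh, OTerm.code, ihφ, ihψ]
  | Q j φ ih => rw [threshN]; simp [FFormula.code, Nat.unpair_pair, FFormula.thresh, OTerm.code]

lemma fsubstN_code (i : ℕ) (b : OTerm) (φ : FFormula) :
    fsubstN i b.code φ.code = (FFormula.subst i b φ).code := by
  induction φ with
  | eq t s =>
      rw [fsubstN]
      simp [FFormula.code, Nat.unpair_pair, FFormula.subst, substN_code]
  | lt t s =>
      rw [fsubstN]
      simp [FFormula.code, Nat.unpair_pair, FFormula.subst, substN_code]
  | not φ ih => rw [fsubstN]; simp [FFormula.code, Nat.unpair_pair, FFormula.subst, ih]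
  | and φ ψ ihφ ihψ =>
      rw [fsubstN]; simp [FFormula.code, Nat.unpair_pair, FFormula.subst, ihφ, ihψ]
  | or φ ψ ihφ ihψ =>
      rw [fsubstN]; simp [FFormula.code, Nat.unpair_pair, FFormula.subst, ihφ, ihψ]
  | Q j φ ih => rw [fsubstN]; simp [FFormula.code, Nat.unpair_pair, FFormula.subst]

lemma btermN_code (i : ℕ) (φ : FFormula) :
    btermN i φ.code = (FFormula.Bterm i φ).code := by
  have h1 : (Nat.pair 2 0) = (OTerm.one).code := rfl
  rw [btermN, h1, threshN_code, substN_code]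
  rfl

lemma elimN_code (φ : FFormula) : elimN φ.code = φ.elim.code := by
  induction φ with
  | eq t s => rw [elimN]; simp [FFormula.code, Nat.unpair_pair, FFormula.elim]
  | lt t s => rw [elimN]; simp [FFormula.code, Nat.unpair_pair, FFormula.elim]
  | not φ ih => rw [elimN]; simp [FFormula.code, Nat.unpair_pair, FFormula.elim, ih]
  | and φ ψ ihφ ihψ =>
      rw [elimN]; simp [FFormula.code, Nat.unpair_pair, FFormula.elim, ihφ, ihψ]
  | or φ ψ ihφ ihψ =>
      rw [elimN]; simp [FFormula.code, Nat.unpair_pair, FFormula.elim, ihφ, ihψ]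
  | Q j φ ih =>
      rw [elimN]
      simp only [FFormula.code, Nat.unpair_pair, FFormula.elim]
      norm_num
      rw [ih, btermN_code, fsubstN_code]

lemma bevalN_code (φ : FFormula) : bevalN φ.code = (if φ.beval then 1 else 0) := by
  induction φ with
  | eq t s =>
      rw [bevalN]
      simp only [FFormula.code, Nat.unpair_pair, FFormula.beval, evalZeroN_code]
      norm_num
  | lt t s =>
      rw [bevalN]
      simp only [FFormula.code, Nat.unpair_pair, FFormula.beval, evalZeroN_code]
      norm_num
  | not φ ih =>
      rw [bevalN]
      simp only [FFormula.code, Nat.unpair_pair, FFormula.beval, ih]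
      norm_num
      cases φ.beval <;> simp
  | and φ ψ ihφ ihψ =>
      rw [bevalN]
      simp only [FFormula.code, Nat.unpair_pair, FFormula.beval, ihφ, ihψ]
      norm_num
      cases φ.beval <;> cases ψ.beval <;> simp
  | or φ ψ ihφ ihψ =>
      rw [bevalN]
      simp only [FFormula.code, Nat.unpair_pair, FFormula.beval, ihφ, ihψ]
      norm_num
      cases φ.beval <;> cases ψ.beval <;> simp
  | Q j φ ih =>
      rw [bevalN]
      simp [FFormula.code, Nat.unpair_pair, FFormula.beval]

/-! ### Primitive recursiveness -/

section PrimrecHelpers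

variable {α : Type*} [Primcodable α]

lemma pr_len : Primrec fun p : α × List ℕ => p.2.length :=
  Primrec.list_length.comp Primrec.snd

lemma pr_u1 : Primrec fun p : α × List ℕ => p.2.length.unpair.1 :=
  Primrec.fst.comp (Primrec.unpair.comp pr_len)

lemma pr_u2 : Primrec fun p : α × List ℕ => p.2.length.unpair.2 :=
  Primrec.snd.comp (Primrec.unpair.comp pr_len)

lemma pr_u21 : Primrec fun p : α × List ℕ => p.2.length.unpair.2.unpair.1 :=
  Primrec.fst.comp (Primrec.unpair.comp pr_u2)

lemma pr_u22 : Primrec fun p : α × List ℕ => p.2.length.unpair.2.unpair.2 :=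
  Primrec.snd.comp (Primrec.unpair.comp pr_u2)

lemma pr_get {f : α × List ℕ → ℕ} (hf : Primrec f) :
    Primrec fun p : α × List ℕ => (p.2[f p]?).getD 0 :=
  Primrec.option_getD.comp (Primrec.list_getElem?.comp Primrec.snd hf) (Primrec.const 0)

lemma pr_tag (k : ℕ) : PrimrecPred fun p : α × List ℕ => p.2.length.unpair.1 = k :=
  PrimrecRel.comp Primrec.eq pr_u1 (Primrec.const k)

lemma pr_tag2 (k k' : ℕ) :
    PrimrecPred fun p : α × List ℕ =>
      p.2.length.unpair.1 = k ∨ p.2.length.unpair.1 = k' :=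
  PrimrecPred.or (pr_tag k) (pr_tag k')

end PrimrecHelpers

/-! #### evalZeroN -/

def gEvalZero (_ : Unit) (l : List ℕ) : ℕ :=
  if l.length.unpair.1 = 3 then
    (l[l.length.unpair.2.unpair.1]?).getD 0 + (l[l.length.unpair.2.unpair.2]?).getD 0
  else if l.length.unpair.1 = 4 then
    (l[l.length.unpair.2.unpair.1]?).getD 0 * (l[l.length.unpair.2.unpair.2]?).getD 0
  else if l.length.unpair.1 = 2 then 1
  else 0

lemma gEvalZero_primrec : Primrec₂ gEvalZero := by
  have h : Primrec fun p : Unit × List ℕ => gEvalZero p.1 p.2 := by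
    unfold gEvalZero
    exact Primrec.ite (pr_tag 3)
      (Primrec.nat_add.comp (pr_get pr_u21) (pr_get pr_u22))
      (Primrec.ite (pr_tag 4)
        (Primrec.nat_mul.comp (pr_get pr_u21) (pr_get pr_u22))
        (Primrec.ite (pr_tag 2) (Primrec.const 1) (Primrec.const 0)))
  exact h

lemma evalZeroN_primrec : Primrec evalZeroN := by
  have H : ∀ (a : Unit) (n : ℕ),
      (fun (a : Unit) (l : List ℕ) => some (gEvalZero a l)) a
        ((List.range n).map ((fun (_ : Unit) (m : ℕ) => evalZeroN m) a)) =
      some (evalZeroN n) := by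
    intro a n
    simp only [Option.some.injEq]
    rw [evalZeroN]
    simp only [gEvalZero, List.length_map, List.length_range]
    by_cases h3 : n.unpair.1 = 3
    · have ha : (Nat.unpair (Nat.unpair n).2).1 < n := unpair21_lt (by omega)
      have hb : (Nat.unpair (Nat.unpair n).2).2 < n := unpair22_lt (by omega)
      simp only [cov_get _ ha, cov_get _ hb]
      simp [h3]
    · by_cases h4 : n.unpair.1 = 4
      · have ha : (Nat.unpair (Nat.unpair n).2).1 < n := unpair21_lt (by omega)
        have hb : (Nat.unpair (Nat.unpair n).2).2 < n := unpair22_lt (by omega)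
        simp only [cov_get _ ha, cov_get _ hb]
        simp [h3, h4]
      · simp [h3, h4]
  have h := Primrec.nat_strong_rec (fun (_ : Unit) (m : ℕ) => evalZeroN m)
    (Primrec.option_some.comp₂ gEvalZero_primrec) H
  exact h.comp (Primrec.const ()) Primrec.id

/-! #### substN -/

def gSubst (q : ℕ × ℕ) (l : List ℕ) : ℕ :=
  if l.length.unpair.1 = 3 ∨ l.length.unpair.1 = 4 then
    Nat.pair l.length.unpair.1
      (Nat.pair ((l[l.length.unpair.2.unpair.1]?).getD 0)
        ((l[l.length.unpair.2.unpair.2]?).getD 0))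
  else if l.length.unpair.1 = 0 then (if l.length.unpair.2 = q.1 then q.2 else l.length)
  else l.length

lemma gSubst_primrec : Primrec₂ gSubst := by
  have h : Primrec fun p : (ℕ × ℕ) × List ℕ => gSubst p.1 p.2 := by
    unfold gSubst
    refine Primrec.ite (pr_tag2 3 4)
      (Primrec₂.natPair.comp pr_u1
        (Primrec₂.natPair.comp (pr_get pr_u21) (pr_get pr_u22))) ?_
    refine Primrec.ite (pr_tag 0) ?_ pr_len
    exact Primrec.ite (PrimrecRel.comp Primrec.eq pr_u2 (Primrec.fst.comp Primrec.fst))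
      (Primrec.snd.comp Primrec.fst) pr_len
  exact h

lemma substN_primrec : Primrec₂ (fun (q : ℕ × ℕ) (n : ℕ) => substN q.1 q.2 n) := by
  have H : ∀ (q : ℕ × ℕ) (n : ℕ),
      (fun (q : ℕ × ℕ) (l : List ℕ) => some (gSubst q l)) q
        ((List.range n).map ((fun (q : ℕ × ℕ) (m : ℕ) => substN q.1 q.2 m) q)) =
      some (substN q.1 q.2 n) := by
    intro q n
    simp only [Option.some.injEq]
    rw [substN]
    simp only [gSubst, List.length_map, List.length_range]
    by_cases h34 : n.unpair.1 = 3 ∨ n.unpair.1 = 4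
    · have ha : (Nat.unpair (Nat.unpair n).2).1 < n := unpair21_lt (by omega)
      have hb : (Nat.unpair (Nat.unpair n).2).2 < n := unpair22_lt (by omega)
      simp only [cov_get _ ha, cov_get _ hb]
      simp [h34]
    · simp [h34]
  exact Primrec.nat_strong_rec _ (Primrec.option_some.comp₂ gSubst_primrec) H

/-! #### threshN -/

def gThresh (_ : Unit) (l : List ℕ) : ℕ :=
  if l.length.unpair.1 = 0 ∨ l.length.unpair.1 = 1 then Nat.pair 3 l.length.unpair.2
  else if l.length.unpair.1 = 2 then (l[l.length.unpair.2]?).getD 0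
  else if l.length.unpair.1 = 3 ∨ l.length.unpair.1 = 4 then
    Nat.pair 3
      (Nat.pair ((l[l.length.unpair.2.unpair.1]?).getD 0)
        ((l[l.length.unpair.2.unpair.2]?).getD 0))
  else Nat.pair 1 0

lemma gThresh_primrec : Primrec₂ gThresh := by
  have h : Primrec fun p : Unit × List ℕ => gThresh p.1 p.2 := by
    unfold gThresh
    refine Primrec.ite (pr_tag2 0 1) (Primrec₂.natPair.comp (Primrec.const 3) pr_u2) ?_
    refine Primrec.ite (pr_tag 2) (pr_get pr_u2) ?_
    exact Primrec.ite (pr_tag2 3 4)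
      (Primrec₂.natPair.comp (Primrec.const 3)
        (Primrec₂.natPair.comp (pr_get pr_u21) (pr_get pr_u22)))
      (Primrec.const (Nat.pair 1 0))
  exact h

lemma threshN_primrec : Primrec threshN := by
  have H : ∀ (a : Unit) (n : ℕ),
      (fun (a : Unit) (l : List ℕ) => some (gThresh a l)) a
        ((List.range n).map ((fun (_ : Unit) (m : ℕ) => threshN m) a)) =
      some (threshN n) := by
    intro a n
    simp only [Option.some.injEq]
    rw [threshN]
    simp only [gThresh, List.length_map, List.length_range]
    by_cases h01 : n.unpair.1 = 0 ∨ n.unpair.1 = 1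
    · simp [h01]
    · by_cases h2 : n.unpair.1 = 2
      · have hc : (Nat.unpair n).2 < n := unpair2_lt (by omega)
        simp only [cov_get _ hc]
        simp [h01, h2]
      · by_cases h34 : n.unpair.1 = 3 ∨ n.unpair.1 = 4
        · have ha : (Nat.unpair (Nat.unpair n).2).1 < n := unpair21_lt (by omega)
          have hb : (Nat.unpair (Nat.unpair n).2).2 < n := unpair22_lt (by omega)
          simp only [cov_get _ ha, cov_get _ hb]
          simp [h01, h2, h34]
        · simp [h01, h2, h34]
  have h := Primrec.nat_strong_rec (fun (_ : Unit) (m : ℕ) => threshN m)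
    (Primrec.option_some.comp₂ gThresh_primrec) H
  exact h.comp (Primrec.const ()) Primrec.id

/-! #### fsubstN -/

def gFsubst (q : ℕ × ℕ) (l : List ℕ) : ℕ :=
  if l.length.unpair.1 = 0 ∨ l.length.unpair.1 = 1 then
    Nat.pair l.length.unpair.1
      (Nat.pair (substN q.1 q.2 l.length.unpair.2.unpair.1)
        (substN q.1 q.2 l.length.unpair.2.unpair.2))
  else if l.length.unpair.1 = 2 then Nat.pair 2 ((l[l.length.unpair.2]?).getD 0)
  else if l.length.unpair.1 = 3 ∨ l.length.unpair.1 = 4 then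
    Nat.pair l.length.unpair.1
      (Nat.pair ((l[l.length.unpair.2.unpair.1]?).getD 0)
        ((l[l.length.unpair.2.unpair.2]?).getD 0))
  else l.length

lemma gFsubst_primrec : Primrec₂ gFsubst := by
  have h : Primrec fun p : (ℕ × ℕ) × List ℕ => gFsubst p.1 p.2 := by
    unfold gFsubst
    refine Primrec.ite (pr_tag2 0 1)
      (Primrec₂.natPair.comp pr_u1
        (Primrec₂.natPair.comp (substN_primrec.comp Primrec.fst pr_u21)
          (substN_primrec.comp Primrec.fst pr_u22))) ?_
    refine Primrec.ite (pr_tag 2)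
      (Primrec₂.natPair.comp (Primrec.const 2) (pr_get pr_u2)) ?_
    exact Primrec.ite (pr_tag2 3 4)
      (Primrec₂.natPair.comp pr_u1
        (Primrec₂.natPair.comp (pr_get pr_u21) (pr_get pr_u22)))
      pr_len
  exact h

lemma fsubstN_primrec : Primrec₂ (fun (q : ℕ × ℕ) (n : ℕ) => fsubstN q.1 q.2 n) := by
  have H : ∀ (q : ℕ × ℕ) (n : ℕ),
      (fun (q : ℕ × ℕ) (l : List ℕ) => some (gFsubst q l)) q
        ((List.range n).map ((fun (q : ℕ × ℕ) (m : ℕ) => fsubstN q.1 q.2 m) q)) =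
      some (fsubstN q.1 q.2 n) := by
    intro q n
    simp only [Option.some.injEq]
    rw [fsubstN]
    simp only [gFsubst, List.length_map, List.length_range]
    by_cases h01 : n.unpair.1 = 0 ∨ n.unpair.1 = 1
    · simp [h01]
    · by_cases h2 : n.unpair.1 = 2
      · have hc : (Nat.unpair n).2 < n := unpair2_lt (by omega)
        simp only [cov_get _ hc]
        simp [h01, h2]
      · by_cases h34 : n.unpair.1 = 3 ∨ n.unpair.1 = 4
        · have ha : (Nat.unpair (Nat.unpair n).2).1 < n := unpair21_lt (by omega)
          have hb : (Nat.unpair (Nat.unpair n).2).2 < n := unpair22_lt (by omega)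
          simp only [cov_get _ ha, cov_get _ hb]
          simp [h01, h2, h34]
        · simp [h01, h2, h34]
  exact Primrec.nat_strong_rec _ (Primrec.option_some.comp₂ gFsubst_primrec) H

/-! #### elimN -/

lemma btermN_primrec : Primrec₂ btermN := by
  have h : Primrec fun q : ℕ × ℕ => btermN q.1 q.2 := by
    unfold btermN
    have hsub : Primrec fun q : ℕ × ℕ => substN q.1 (Nat.pair 2 0) (threshN q.2) :=
      substN_primrec.comp (Primrec.pair Primrec.fst (Primrec.const (Nat.pair 2 0)))
        (threshN_primrec.comp Primrec.snd)
    exact Primrec₂.natPair.comp (Primrec.const 3)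
      (Primrec₂.natPair.comp hsub (Primrec.const (Nat.pair 2 0)))
  exact h

def gElim (_ : Unit) (l : List ℕ) : ℕ :=
  if l.length.unpair.1 = 0 ∨ l.length.unpair.1 = 1 then l.length
  else if l.length.unpair.1 = 2 then Nat.pair 2 ((l[l.length.unpair.2]?).getD 0)
  else if l.length.unpair.1 = 3 ∨ l.length.unpair.1 = 4 then
    Nat.pair l.length.unpair.1
      (Nat.pair ((l[l.length.unpair.2.unpair.1]?).getD 0)
        ((l[l.length.unpair.2.unpair.2]?).getD 0))
  else if l.length.unpair.1 = 5 then
    fsubstN l.length.unpair.2.unpair.1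
      (btermN l.length.unpair.2.unpair.1 ((l[l.length.unpair.2.unpair.2]?).getD 0))
      ((l[l.length.unpair.2.unpair.2]?).getD 0)
  else l.length

lemma gElim_primrec : Primrec₂ gElim := by
  have h : Primrec fun p : Unit × List ℕ => gElim p.1 p.2 := by
    unfold gElim
    refine Primrec.ite (pr_tag2 0 1) pr_len ?_
    refine Primrec.ite (pr_tag 2)
      (Primrec₂.natPair.comp (Primrec.const 2) (pr_get pr_u2)) ?_
    refine Primrec.ite (pr_tag2 3 4)
      (Primrec₂.natPair.comp pr_u1
        (Primrec₂.natPair.comp (pr_get pr_u21) (pr_get pr_u22))) ?_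
    refine Primrec.ite (pr_tag 5) ?_ pr_len
    exact fsubstN_primrec.comp
      (Primrec.pair pr_u21 (btermN_primrec.comp pr_u21 (pr_get pr_u22)))
      (pr_get pr_u22)
  exact h

lemma elimN_primrec : Primrec elimN := by
  have H : ∀ (a : Unit) (n : ℕ),
      (fun (a : Unit) (l : List ℕ) => some (gElim a l)) a
        ((List.range n).map ((fun (_ : Unit) (m : ℕ) => elimN m) a)) =
      some (elimN n) := by
    intro a n
    simp only [Option.some.injEq]
    rw [elimN]
    simp only [gElim, List.length_map, List.length_range]
    by_cases h01 : n.unpair.1 = 0 ∨ n.unpair.1 = 1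
    · simp [h01]
    · by_cases h2 : n.unpair.1 = 2
      · have hc : (Nat.unpair n).2 < n := unpair2_lt (by omega)
        simp only [cov_get _ hc]
        simp [h01, h2]
      · by_cases h34 : n.unpair.1 = 3 ∨ n.unpair.1 = 4
        · have ha : (Nat.unpair (Nat.unpair n).2).1 < n := unpair21_lt (by omega)
          have hb : (Nat.unpair (Nat.unpair n).2).2 < n := unpair22_lt (by omega)
          simp only [cov_get _ ha, cov_get _ hb]
          simp [h01, h2, h34]
        · by_cases h5 : n.unpair.1 = 5
          · have hb : (Nat.unpair (Nat.unpair n).2).2 < n := unpair22_lt (by omega)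
            simp only [cov_get _ hb]
            simp [h01, h2, h34, h5]
          · simp [h01, h2, h34, h5]
  have h := Primrec.nat_strong_rec (fun (_ : Unit) (m : ℕ) => elimN m)
    (Primrec.option_some.comp₂ gElim_primrec) H
  exact h.comp (Primrec.const ()) Primrec.id

/-! #### bevalN -/

def gBeval (_ : Unit) (l : List ℕ) : ℕ :=
  if l.length.unpair.1 = 0 then
    (if evalZeroN l.length.unpair.2.unpair.1 = evalZeroN l.length.unpair.2.unpair.2
      then 1 else 0)
  else if l.length.unpair.1 = 1 then
    (if evalZeroN l.length.unpair.2.unpair.1 < evalZeroN l.length.unpair.2.unpair.2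
      then 1 else 0)
  else if l.length.unpair.1 = 2 then 1 - (l[l.length.unpair.2]?).getD 0
  else if l.length.unpair.1 = 3 then
    min ((l[l.length.unpair.2.unpair.1]?).getD 0) ((l[l.length.unpair.2.unpair.2]?).getD 0)
  else if l.length.unpair.1 = 4 then
    max ((l[l.length.unpair.2.unpair.1]?).getD 0) ((l[l.length.unpair.2.unpair.2]?).getD 0)
  else 0

lemma gBeval_primrec : Primrec₂ gBeval := by
  have h : Primrec fun p : Unit × List ℕ => gBeval p.1 p.2 := by
    unfold gBeval
    refine Primrec.ite (pr_tag 0)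
      (Primrec.ite
        (PrimrecRel.comp Primrec.eq (evalZeroN_primrec.comp pr_u21)
          (evalZeroN_primrec.comp pr_u22))
        (Primrec.const 1) (Primrec.const 0)) ?_
    refine Primrec.ite (pr_tag 1)
      (Primrec.ite
        (PrimrecRel.comp Primrec.nat_lt (evalZeroN_primrec.comp pr_u21)
          (evalZeroN_primrec.comp pr_u22))
        (Primrec.const 1) (Primrec.const 0)) ?_
    refine Primrec.ite (pr_tag 2) (Primrec.nat_sub.comp (Primrec.const 1) (pr_get pr_u2)) ?_
    refine Primrec.ite (pr_tag 3) (Primrec.nat_min.comp (pr_get pr_u21) (pr_get pr_u22)) ?_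
    exact Primrec.ite (pr_tag 4) (Primrec.nat_max.comp (pr_get pr_u21) (pr_get pr_u22))
      (Primrec.const 0)
  exact h

lemma bevalN_primrec : Primrec bevalN := by
  have H : ∀ (a : Unit) (n : ℕ),
      (fun (a : Unit) (l : List ℕ) => some (gBeval a l)) a
        ((List.range n).map ((fun (_ : Unit) (m : ℕ) => bevalN m) a)) =
      some (bevalN n) := by
    intro a n
    simp only [Option.some.injEq]
    rw [bevalN]
    simp only [gBeval, List.length_map, List.length_range]
    by_cases h0 : n.unpair.1 = 0
    · simp [h0]
    · by_cases h1 : n.unpair.1 = 1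
      · simp [h0, h1]
      · by_cases h2 : n.unpair.1 = 2
        · have hc : (Nat.unpair n).2 < n := unpair2_lt (by omega)
          simp only [cov_get _ hc]
          simp [h0, h1, h2]
        · by_cases h3 : n.unpair.1 = 3
          · have ha : (Nat.unpair (Nat.unpair n).2).1 < n := unpair21_lt (by omega)
            have hb : (Nat.unpair (Nat.unpair n).2).2 < n := unpair22_lt (by omega)
            simp only [cov_get _ ha, cov_get _ hb]
            simp [h0, h1, h2, h3]
          · by_cases h4 : n.unpair.1 = 4
            · have ha : (Nat.unpair (Nat.unpair n).2).1 < n := unpair21_lt (by omega)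
              have hb : (Nat.unpair (Nat.unpair n).2).2 < n := unpair22_lt (by omega)
              simp only [cov_get _ ha, cov_get _ hb]
              simp [h0, h1, h2, h3, h4]
            · simp [h0, h1, h2, h3, h4]
  have h := Primrec.nat_strong_rec (fun (_ : Unit) (m : ℕ) => bevalN m)
    (Primrec.option_some.comp₂ gBeval_primrec) H
  exact h.comp (Primrec.const ()) Primrec.id

/-- The `F`-theory of `ℕ` is decidable: there is a computable function on
Gödel numbers deciding whether an `F`-sentence is true in `ℕ`. -/
theorem F_theory_of_nat_decidable :
    ∃ f : ℕ → Bool, Computable f ∧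
      ∀ φ : FFormula, φ.IsSentence →
        (f φ.code = true ↔ φ.Sat ℕ (fun _ => 0)) := by
  refine ⟨fun n => decide (bevalN (elimN n) = 1), ?_, ?_⟩
  · have h : PrimrecPred fun n : ℕ => bevalN (elimN n) = 1 :=
      PrimrecRel.comp Primrec.eq (bevalN_primrec.comp elimN_primrec) (Primrec.const 1)
    exact Primrec.to_comp h.decide
  · intro φ _
    show decide (bevalN (elimN φ.code) = 1) = true ↔ _
    rw [elimN_code, bevalN_code]
    have hm := FFormula.main_sem φ
    constructor
    · intro h
      apply hm.1
      revert h
      cases φ.elim.beval <;> simp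
    · intro h
      have hb := hm.2 h
      simp [hb]
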